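/- Let p ∈ Δ with all components positive, let j be an index such that p_i < p_j for all i ≠ j (i.e., class j has positive margin), and let q : {1, …, c} → (0, 1] assign an instance-dependent GCE hyperparameter to each class. Writing q_min = min_{i ≠ j} q_i and q_max = max_{i ≠ j} q_i, the sum of the instance-dependent GCE losses over all class labels satisfies (c − 1 − (c−1)^{1−q_min}·(1 − p_j)^{q_min})/q_max + (1 − p_j^{q_j})/q_j ≤ Σ_{i=1}^c (1 − p_i^{q_i})/q_i ≤ (c − 2 + p_j)/q_min + (1 − p_j^{q_j})/q_j. -/

import Mathlib

/-- Pro. 2 of the paper: Let `p` be in the probability simplex with all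
components positive, let `j` be an index such that `p_i < p_j` for all `i ≠ j` (class `j`
has positive margin), and let `q : {1,…,c} → (0,1]` assign an instance-dependent GCE
hyperparameter to each class. With `q_min = min_{i ≠ j} q_i` and `q_max = max_{i ≠ j} q_i`,
the sum of the instance-dependent GCE losses over all class labels satisfies
`(c − 1 − (c−1)^{1−q_min}·(1 − p_j)^{q_min})/q_max + (1 − p_j^{q_j})/q_j
  ≤ Σ_i (1 − p_i^{q_i})/q_i ≤ (c − 2 + p_j)/q_min + (1 − p_j^{q_j})/q_j`. -/
theorem instance_dependent_gce_bounded (c : ℕ) (hc : 2 ≤ c)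
    (p : Fin c → ℝ) (hp0 : ∀ i, 0 < p i) (hp1 : ∑ i, p i = 1)
    (j : Fin c) (hj : ∀ i, i ≠ j → p i < p j)
    (q : Fin c → ℝ) (hq0 : ∀ i, 0 < q i) (hq1 : ∀ i, q i ≤ 1)
    (qmin qmax : ℝ)
    (hqmin : qmin = ⨅ i : {i : Fin c // i ≠ j}, q (i : Fin c))
    (hqmax : qmax = ⨆ i : {i : Fin c // i ≠ j}, q (i : Fin c)) :
    ((c : ℝ) - 1 - ((c : ℝ) - 1) ^ (1 - qmin) * (1 - p j) ^ qmin) / qmax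
        + (1 - p j ^ q j) / q j ≤ ∑ i, (1 - p i ^ q i) / q i ∧
      ∑ i, (1 - p i ^ q i) / q i
        ≤ ((c : ℝ) - 2 + p j) / qmin + (1 - p j ^ q j) / q j := by
  haveI : Nontrivial (Fin c) := Fin.nontrivial_iff_two_le.mpr hc
  obtain ⟨i₀, hi₀⟩ := exists_ne j
  haveI : Nonempty {i : Fin c // i ≠ j} := ⟨⟨i₀, hi₀⟩⟩
  -- basic facts about qmin, qmax
  have hqmin_le : ∀ i : Fin c, i ≠ j → qmin ≤ q i := by
    intro i hi
    rw [hqmin]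
    exact ciInf_le (Set.finite_range fun i : {i : Fin c // i ≠ j} => q (i : Fin c)).bddBelow ⟨i, hi⟩
  have hle_qmax : ∀ i : Fin c, i ≠ j → q i ≤ qmax := by
    intro i hi
    rw [hqmax]
    exact le_ciSup (Set.finite_range fun i : {i : Fin c // i ≠ j} => q (i : Fin c)).bddAbove ⟨i, hi⟩
  obtain ⟨i₁, hi₁⟩ := exists_eq_ciInf_of_finite (f := fun i : {i : Fin c // i ≠ j} => q i)
  have hqmin_pos : 0 < qmin := by rw [hqmin, ← hi₁]; exact hq0 _
  have hqmin_one : qmin ≤ 1 := by rw [hqmin, ← hi₁]; exact hq1 _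
  have hqmax_pos : 0 < qmax := lt_of_lt_of_le (hq0 i₀) (hle_qmax i₀ hi₀)
  -- sums over the erased set
  set s : Finset (Fin c) := Finset.univ.erase j with hs
  have hsum : ∀ f : Fin c → ℝ, ∑ i ∈ s, f i + f j = ∑ i, f i := fun f =>
    Finset.sum_erase_add Finset.univ f (Finset.mem_univ j)
  have hps : ∑ i ∈ s, p i = 1 - p j := by
    have := hsum p; rw [hp1] at this; linarith
  have hcard : (s.card : ℝ) = (c : ℝ) - 1 := by
    rw [hs, Finset.card_erase_of_mem (Finset.mem_univ j), Finset.card_univ, Fintype.card_fin]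
    rw [Nat.cast_sub (by omega)]; norm_num
  have hpj_lt : p j < 1 := by
    have h1 : 0 < ∑ i ∈ s, p i :=
      Finset.sum_pos (fun i _ => hp0 i) ⟨i₀, by simp [hs, hi₀]⟩
    linarith [hps]
  have hpi_le : ∀ i ∈ s, p i ≤ 1 - p j := by
    intro i hi
    rw [← hps]
    exact Finset.single_le_sum (fun k _ => (hp0 k).le) hi
  have hpi_lt1 : ∀ i ∈ s, p i ≤ 1 := fun i hi => le_trans (hpi_le i hi) (by linarith [hp0 j])
  constructor
  · -- lower bound
    rw [← hsum (fun i => (1 - p i ^ q i) / q i)]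
    have h1 : ∀ i ∈ s, (1 - p i ^ qmin) / qmax ≤ (1 - p i ^ q i) / q i := by
      intro i hi
      have hiq : p i ^ q i ≤ p i ^ qmin :=
        Real.rpow_le_rpow_of_exponent_ge (hp0 i) (hpi_lt1 i hi)
          (hqmin_le i (Finset.ne_of_mem_erase hi))
      have hle1 : p i ^ q i ≤ 1 :=
        Real.rpow_le_one (hp0 i).le (hpi_lt1 i hi) (hq0 i).le
      exact div_le_div₀ (by linarith) (by linarith) (hq0 i)
        (hle_qmax i (Finset.ne_of_mem_erase hi))
    have h2 : ∑ i ∈ s, (1 - p i ^ qmin) / qmax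
        = ((c : ℝ) - 1 - ∑ i ∈ s, p i ^ qmin) / qmax := by
      rw [← Finset.sum_div, Finset.sum_sub_distrib, Finset.sum_const, nsmul_eq_mul,
        mul_one, hcard]
    have h3 : ∑ i ∈ s, p i ^ qmin ≤ ((c : ℝ) - 1) ^ (1 - qmin) * (1 - p j) ^ qmin := by
      have hc1 : (0:ℝ) < (c : ℝ) - 1 := by
        have : (2:ℝ) ≤ (c:ℝ) := by exact_mod_cast hc
        linarith
      have hw' : ∑ _i ∈ s, ((c : ℝ) - 1)⁻¹ = 1 := by
        rw [Finset.sum_const, nsmul_eq_mul, hcard, mul_inv_cancel₀ hc1.ne']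
      have hp' : (1:ℝ) ≤ 1 / qmin := (le_div_iff₀ hqmin_pos).mpr (by linarith)
      have key := Real.arith_mean_le_rpow_mean s (fun _ => ((c : ℝ) - 1)⁻¹)
        (fun i => p i ^ qmin) (fun i _ => by positivity) hw'
        (fun i _ => Real.rpow_nonneg (hp0 i).le _) hp'
      have hz : ∀ i ∈ s, ((c : ℝ) - 1)⁻¹ * (p i ^ qmin) ^ (1 / qmin)
          = ((c : ℝ) - 1)⁻¹ * p i := by
        intro i _
        rw [← Real.rpow_mul (hp0 i).le, mul_one_div, div_self hqmin_pos.ne', Real.rpow_one]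
      rw [Finset.sum_congr rfl hz, ← Finset.mul_sum, ← Finset.mul_sum, hps, one_div_one_div] at key

      have hpj_nn : (0:ℝ) ≤ 1 - p j := by linarith
      calc ∑ i ∈ s, p i ^ qmin
          = ((c : ℝ) - 1) * (((c : ℝ) - 1)⁻¹ * ∑ i ∈ s, p i ^ qmin) := by
            field_simp
        _ ≤ ((c : ℝ) - 1) * (((c : ℝ) - 1)⁻¹ * (1 - p j)) ^ qmin :=
            mul_le_mul_of_nonneg_left key hc1.le
        _ = ((c : ℝ) - 1) ^ (1 - qmin) * (1 - p j) ^ qmin := by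
            rw [Real.mul_rpow (by positivity) hpj_nn, Real.inv_rpow hc1.le,
              Real.rpow_sub hc1, Real.rpow_one, div_eq_mul_inv]
            ring
    calc ((c : ℝ) - 1 - ((c : ℝ) - 1) ^ (1 - qmin) * (1 - p j) ^ qmin) / qmax
          + (1 - p j ^ q j) / q j
        ≤ ((c : ℝ) - 1 - ∑ i ∈ s, p i ^ qmin) / qmax + (1 - p j ^ q j) / q j := by
          gcongr
      _ = ∑ i ∈ s, (1 - p i ^ qmin) / qmax + (1 - p j ^ q j) / q j := by rw [h2]
      _ ≤ ∑ i ∈ s, (1 - p i ^ q i) / q i + (1 - p j ^ q j) / q j :=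
          add_le_add_left (Finset.sum_le_sum h1) _
  · -- upper bound
    rw [← hsum (fun i => (1 - p i ^ q i) / q i)]
    have h1 : ∀ i ∈ s, (1 - p i ^ q i) / q i ≤ (1 - p i) / qmin := by
      intro i hi
      have hiq : p i ≤ p i ^ q i := by
        have := Real.rpow_le_rpow_of_exponent_ge (hp0 i) (hpi_lt1 i hi) (hq1 i)
        rwa [Real.rpow_one] at this
      exact div_le_div₀ (by linarith [hpi_lt1 i hi]) (by linarith) hqmin_pos
        (hqmin_le i (Finset.ne_of_mem_erase hi))
    calc ∑ i ∈ s, (1 - p i ^ q i) / q i + (1 - p j ^ q j) / q j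
        ≤ ∑ i ∈ s, (1 - p i) / qmin + (1 - p j ^ q j) / q j :=
          add_le_add_left (Finset.sum_le_sum h1) _
      _ = ((c : ℝ) - 2 + p j) / qmin + (1 - p j ^ q j) / q j := by
          rw [← Finset.sum_div, Finset.sum_sub_distrib, Finset.sum_const, nsmul_eq_mul,
            mul_one, hcard, hps]
          ring_nf
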